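/- arXiv:1802.09097 — 3 statements merged into one kernel-verified Lean document; each statement's English description precedes it below -/
import Mathlib

section
/- If θ ∈ (0, π/2) satisfies cos θ = 1/3, then θ/π is irrational. -/
open Real

private def aseq : ℕ → ℤ
  | 0 => 1
  | 1 => 1
  | (n+2) => 2 * aseq (n+1) - 9 * aseq n

private lemma aseq_cos (θ : ℝ) (hcos : Real.cos θ = 1 / 3) :
    ∀ n : ℕ, (aseq n : ℝ) = 3 ^ n * Real.cos (n * θ) := by
  intro n
  induction n using Nat.strong_induction_on with
  | _ n ih =>
    match n with
    | 0 => simp [aseq]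
    | 1 => simp [aseq, hcos]
    | (n+2) =>
      have h1 := ih (n+1) (by omega)
      have h0 := ih n (by omega)
      rw [show aseq (n+2) = 2 * aseq (n+1) - 9 * aseq n from rfl]
      push_cast at h1 h0 ⊢
      have e2 : ((n:ℝ)+2)*θ = (((n:ℝ)+1)*θ) + θ := by ring
      have e0 : (n:ℝ)*θ = (((n:ℝ)+1)*θ) - θ := by ring
      rw [e2, Real.cos_add]
      rw [e0, Real.cos_sub] at h0
      rw [h1, h0, hcos]
      ring

private lemma aseq_not_dvd : ∀ n : ℕ, 1 ≤ n → ¬ (3 : ℤ) ∣ aseq n := by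
  intro n
  induction n using Nat.strong_induction_on with
  | _ n ih =>
    match n with
    | 0 => omega
    | 1 => decide
    | (n+2) =>
      intro _ h
      have h1 : ¬ (3 : ℤ) ∣ aseq (n+1) := ih (n+1) (by omega) (by omega)
      rw [show aseq (n+2) = 2 * aseq (n+1) - 9 * aseq n from rfl] at h
      omega

/-- If `θ ∈ (0, π/2)` and `cos θ = 1/3`, then `θ/π` is irrational. -/
theorem stmt_4 (θ : ℝ) (h0 : 0 < θ) (h1 : θ < π / 2) (hcos : Real.cos θ = 1 / 3) :
    Irrational (θ / π) := by
  intro ⟨q, hq⟩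
  have hπ : (0:ℝ) < π := Real.pi_pos
  have hθ : θ = (q : ℝ) * π := by
    field_simp at hq
    linarith [hq]
  set d := q.den with hd
  have hd1 : 1 ≤ d := q.pos
  have hnum : (d : ℝ) * (q : ℝ) = (q.num : ℝ) := by
    rw [hd]
    rw_mod_cast [Rat.den_mul_eq_num] -- maybe wrong name
  have hcosd : |Real.cos ((d : ℕ) * θ)| = 1 := by
    rw [hθ, show ((d:ℕ):ℝ) * ((q:ℝ) * π) = (q.num : ℝ) * π by rw [← mul_assoc, hnum]]
    exact_mod_cast Real.abs_cos_int_mul_pi q.num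
  have habs : |(aseq d : ℝ)| = 3 ^ d := by
    rw [aseq_cos θ hcos d, abs_mul, hcosd, mul_one, abs_of_pos (by positivity)]
  have : |aseq d| = 3 ^ d := by
    exact_mod_cast habs
  have hdvd : (3 : ℤ) ∣ aseq d := by
    have h3 : (3:ℤ) ∣ |aseq d| := this ▸ dvd_pow_self 3 (by omega : d ≠ 0)
    exact (dvd_abs 3 (aseq d)).mp h3
  exact aseq_not_dvd d hd1 hdvd
end

section
/- (Niven) If θ is a real number such that both θ/π and cos θ are rational, then cos θ ∈ {0, ±1/2, ±1}. -/
open Real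

lemma niven_aux (θ : ℝ) (q : ℚ) (hq : (q : ℝ) = θ / π) :
    IsIntegral ℤ ((2 * Real.cos θ : ℝ) : ℂ) := by
  have hπ : (π : ℝ) ≠ 0 := Real.pi_ne_zero
  have hθ : θ = q * π := by field_simp at hq; linarith
  set ζ : ℂ := Complex.exp (θ * Complex.I) with hζ
  have hpow : ζ ^ (2 * q.den) = 1 := by
    rw [hζ, ← Complex.exp_nat_mul]
    have hnum : (q.den : ℂ) * (q : ℂ) = (q.num : ℂ) := by
      push_cast
      rw [mul_comm]
      norm_cast
      exact_mod_cast Rat.mul_den_eq_num q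
    have : ((2 * q.den : ℕ) : ℂ) * (↑θ * Complex.I) = (q.num : ℂ) * (2 * π * Complex.I) := by
      rw [hθ]
      push_cast
      calc ((2 : ℂ) * q.den) * ((q : ℂ) * π * Complex.I)
          = ((q.den : ℂ) * (q : ℂ)) * (2 * π * Complex.I) := by ring
        _ = (q.num : ℂ) * (2 * π * Complex.I) := by rw [hnum]
    rw [this, Complex.exp_int_mul_two_pi_mul_I]
  have hn : 0 < 2 * q.den := by positivity
  have hζint : IsIntegral ℤ ζ := by
    refine IsIntegral.of_pow hn ?_
    rw [hpow]; exact isIntegral_one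
  have hζ'int : IsIntegral ℤ ζ⁻¹ := by
    refine IsIntegral.of_pow hn ?_
    rw [inv_pow, hpow, inv_one]; exact isIntegral_one
  have hsum : ((2 * Real.cos θ : ℝ) : ℂ) = ζ + ζ⁻¹ := by
    rw [hζ, ← Complex.exp_neg]
    push_cast
    rw [Complex.cos]
    ring
  rw [hsum]
  exact hζint.add hζ'int

/-- Niven's theorem: if both `θ/π` and `cos θ` are rational, then
`cos θ ∈ {0, ±1/2, ±1}`. -/
theorem stmt_5 (θ : ℝ) (h1 : ∃ q : ℚ, (q : ℝ) = θ / π) (h2 : ∃ q : ℚ, (q : ℝ) = Real.cos θ) :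
    Real.cos θ ∈ ({0, 1 / 2, -(1 / 2), 1, -1} : Set ℝ) := by
  obtain ⟨q, hq⟩ := h1
  obtain ⟨c, hc⟩ := h2
  have hint : IsIntegral ℤ ((2 * Real.cos θ : ℝ) : ℂ) := niven_aux θ q hq
  -- descend to ℚ
  have heq : ((2 * c : ℚ) : ℂ) = ((2 * Real.cos θ : ℝ) : ℂ) := by
    rw [← hc]; push_cast; ring
  have hintQ : IsIntegral ℤ (2 * c : ℚ) := by
    have : IsIntegral ℤ ((2 * c : ℚ) : ℂ) := heq ▸ hint
    exact (isIntegral_algHom_iff ((algebraMap ℚ ℂ).toIntAlgHom)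
      (algebraMap ℚ ℂ).injective).mp this
  obtain ⟨n, hn⟩ := IsIntegrallyClosed.isIntegral_iff.mp hintQ
  have hn' : ((n : ℚ) : ℝ) = 2 * Real.cos θ := by
    rw [show ((n:ℤ) : ℚ) = algebraMap ℤ ℚ n from rfl, hn]; push_cast [hc]; ring
  have hb1 : (n : ℝ) ≤ 2 := by
    push_cast at hn'; nlinarith [Real.cos_le_one θ]
  have hb2 : (-2 : ℝ) ≤ n := by
    push_cast at hn'; nlinarith [Real.neg_one_le_cos θ]
  have h1 : n ≤ 2 := by exact_mod_cast hb1
  have h2 : -2 ≤ n := by exact_mod_cast hb2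
  have hcos : Real.cos θ = n / 2 := by push_cast at hn'; linarith
  interval_cases n <;> simp [hcos] <;> norm_num
end

section
/- Let θ be the dihedral angle of a regular tetrahedron (so cos θ = 1/3). Then the supplement π - θ is an irrational multiple of π, and hence the rotation of ℝ³ about any line through angle π - θ has infinite order. -/
noncomputable section
open Real

abbrev E3 := EuclideanSpace ℝ (Fin 3)

def cross3 (u v : E3) : E3 :=
  (EuclideanSpace.equiv (Fin 3) ℝ).symm
    ![u 1 * v 2 - u 2 * v 1, u 2 * v 0 - u 0 * v 2, u 0 * v 1 - u 1 * v 0]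

/-- Rotation of `ℝ³` through `θ` radians about the line through `p` with (unit)
direction `u`, given by the Rodrigues formula. -/
def rot3 (p u : E3) (θ : ℝ) (x : E3) : E3 :=
  p + Real.cos θ • (x - p) + Real.sin θ • cross3 u (x - p)
    + ((1 - Real.cos θ) * (inner ℝ u (x - p) : ℝ)) • u

/-- The line through `p` with direction `u`. -/
def lineThrough (p u : E3) : Set E3 := {x | ∃ t : ℝ, x = p + t • u}

/-! A rational multiple of `π` has a rational cosine only if that cosine is one of `0, ±1/2, ±1`
(Niven), so `cos (π - θ) = -1/3` forces `(π - θ)/π` to be irrational. Writing `R` for the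
rotation through `α` about the unit vector `u`, `R` turns every `w ⊥ u` in the plane spanned by
`w` and `u × w`, so `Rⁿ (p + w) = p + cos (nα) w + sin (nα) (u × w)`. If `Rⁿ = 1` with `n > 0`,
pairing with `w ≠ 0` gives `cos (nα) = 1`, i.e. `nα ∈ 2πℤ`, and `α/π` would be rational. -/

theorem irrational_div_pi_of_cos_eq_ratCast {x : ℝ} {q : ℚ} (hx : cos x = q)
    (hq : (q : ℝ) ∉ ({-1, -1 / 2, 0, 1 / 2, 1} : Set ℝ)) : Irrational (x / π) := by
  rintro ⟨r, hr⟩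
  have hxr : x = r * π := by rw [hr, div_mul_cancel₀ x pi_ne_zero]
  exact hq (hx ▸ niven ⟨r, hxr⟩ ⟨q, hx⟩)

theorem cos_nat_mul_ne_one_of_irrational_div_pi {α : ℝ} (hα : Irrational (α / π)) {n : ℕ}
    (hn : n ≠ 0) : cos (n * α) ≠ 1 := by
  rw [Ne, cos_eq_one_iff]
  rintro ⟨k, hk⟩
  refine hα ⟨2 * k / n, ?_⟩
  have hn' : (n : ℝ) ≠ 0 := Nat.cast_ne_zero.2 hn
  push_cast
  rw [div_eq_div_iff hn' pi_ne_zero]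
  linear_combination hk

theorem exists_ne_zero_inner_eq_zero {F : Type*} [NormedAddCommGroup F] [InnerProductSpace ℝ F]
    [FiniteDimensional ℝ F] (hF : 1 < Module.finrank ℝ F) (u : F) :
    ∃ w : F, w ≠ 0 ∧ inner ℝ u w = 0 := by
  have hspan : (ℝ ∙ u) ≠ ⊤ := (span_lt_top_of_card_lt_finrank (by simpa using hF)).ne
  obtain ⟨w, hw, hw0⟩ := Submodule.exists_mem_ne_zero_of_ne_bot
    (mt Submodule.orthogonal_eq_bot_iff.1 hspan)
  exact ⟨w, hw0, Submodule.inner_right_of_mem_orthogonal (Submodule.mem_span_singleton_self u) hw⟩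

theorem inner_E3_eq (a b : E3) : inner ℝ a b = a 0 * b 0 + a 1 * b 1 + a 2 * b 2 := by
  simp [PiLp.inner_apply, Fin.sum_univ_three, mul_comm]

theorem cross3_apply_zero (u v : E3) : cross3 u v 0 = u 1 * v 2 - u 2 * v 1 := rfl

theorem cross3_apply_one (u v : E3) : cross3 u v 1 = u 2 * v 0 - u 0 * v 2 := rfl

theorem cross3_apply_two (u v : E3) : cross3 u v 2 = u 0 * v 1 - u 1 * v 0 := rfl

theorem cross3_add_smul (u x y : E3) (a b : ℝ) :
    cross3 u (a • x + b • y) = a • cross3 u x + b • cross3 u y := by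
  ext i
  fin_cases i <;>
    simp only [Fin.zero_eta, Fin.mk_one, Fin.reduceFinMk, Fin.isValue, PiLp.add_apply,
      PiLp.smul_apply, smul_eq_mul, cross3_apply_zero, cross3_apply_one, cross3_apply_two] <;>
    ring

theorem cross3_cross3 (u w : E3) :
    cross3 u (cross3 u w) = inner ℝ u w • u - inner ℝ u u • w := by
  rw [inner_E3_eq, inner_E3_eq]
  ext i
  fin_cases i <;>
    simp only [Fin.zero_eta, Fin.mk_one, Fin.reduceFinMk, Fin.isValue, PiLp.sub_apply,
      PiLp.smul_apply, smul_eq_mul, cross3_apply_zero, cross3_apply_one, cross3_apply_two] <;>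
    ring

theorem inner_cross3_left (u w : E3) : inner ℝ u (cross3 u w) = 0 := by
  rw [inner_E3_eq, cross3_apply_zero, cross3_apply_one, cross3_apply_two]; ring

theorem inner_cross3_right (u w : E3) : inner ℝ w (cross3 u w) = 0 := by
  rw [inner_E3_eq, cross3_apply_zero, cross3_apply_one, cross3_apply_two]; ring

theorem rot3_add_cos_smul_add_sin_smul {p u w : E3} (hu : ‖u‖ = 1) (hw : inner ℝ u w = 0)
    (α β : ℝ) :
    rot3 p u α (p + (cos β • w + sin β • cross3 u w)) =
      p + (cos (β + α) • w + sin (β + α) • cross3 u w) := by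
  have huu : inner ℝ u u = (1 : ℝ) := by rw [real_inner_self_eq_norm_sq, hu, one_pow]
  have hinner : inner ℝ u (cos β • w + sin β • cross3 u w) = 0 := by
    simp only [inner_add_right, real_inner_smul_right, hw, inner_cross3_left, mul_zero, add_zero]
  rw [rot3, add_sub_cancel_left, hinner, cross3_add_smul, cross3_cross3, hw, huu, cos_add, sin_add]
  module

theorem rot3_pow_apply {p u w : E3} (hu : ‖u‖ = 1) (hw : inner ℝ u w = 0) {α : ℝ}
    {r : E3 ≃ᵢ E3} (hr : ∀ x, r x = rot3 p u α x) (n : ℕ) :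
    (r ^ n) (p + w) = p + (cos (n * α) • w + sin (n * α) • cross3 u w) := by
  induction n with
  | zero => simp
  | succ n ih =>
    rw [pow_succ', IsometryEquiv.mul_apply, ih, hr, rot3_add_cos_smul_add_sin_smul hu hw,
      Nat.cast_succ, add_one_mul]

theorem not_isOfFinOrder_of_rot3 {p u : E3} (hu : ‖u‖ = 1) {α : ℝ} (hα : Irrational (α / π))
    {r : E3 ≃ᵢ E3} (hr : ∀ x, r x = rot3 p u α x) : ¬ IsOfFinOrder r := by
  rw [isOfFinOrder_iff_pow_eq_one]
  rintro ⟨n, hn, hrn⟩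
  obtain ⟨w, hw0, hw⟩ := exists_ne_zero_inner_eq_zero (by simp) u
  have hfix : w = cos (n * α) • w + sin (n * α) • cross3 u w := by
    simpa [hrn] using rot3_pow_apply hu hw hr n
  have hpair := congrArg (inner ℝ w) hfix
  simp only [inner_add_right, real_inner_smul_right, inner_cross3_right, mul_zero,
    add_zero] at hpair
  have hcos : cos (n * α) = 1 := by
    have hww : inner ℝ w w ≠ (0 : ℝ) := inner_self_ne_zero.2 hw0
    exact (mul_eq_right₀ hww).1 hpair.symm
  exact cos_nat_mul_ne_one_of_irrational_div_pi hα hn.ne' hcos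

/-- For `θ = arccos (1/3)` (the dihedral angle of a regular tetrahedron), the
supplement `π - θ` is an irrational multiple of `π`, and hence every rotation of `ℝ³`
about any line through the angle `π - θ` has infinite order. -/
theorem stmt_7 :
    Irrational ((π - Real.arccos (1 / 3)) / π) ∧
    ∀ (p u : E3) (r : E3 ≃ᵢ E3), ‖u‖ = 1 →
      (∀ x, r x = rot3 p u (π - Real.arccos (1 / 3)) x) → ¬ IsOfFinOrder r := by
  have hcos : cos (π - arccos (1 / 3)) = ((-1 / 3 : ℚ) : ℝ) := by
    rw [cos_pi_sub, cos_arccos (by norm_num) (by norm_num)]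
    push_cast
    ring
  have hirr := irrational_div_pi_of_cos_eq_ratCast hcos (by norm_num)
  exact ⟨hirr, fun p u r hu hr => not_isOfFinOrder_of_rot3 hu hirr hr⟩
end
end
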